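/- (Proposition 1, perturbation part.) Let n be a positive integer, g ∈ ℝⁿ a row vector, H an n×n real matrix with H·H = 0, and μ, γ real numbers. Define the MIFGSM-with-APAA iterates G_1 = g, Δ_1 = γ·g, and for every t ≥ 1: G_{t+1} = μ·G_t + (g + Δ_t H) and Δ_{t+1} = Δ_t + γ·G_{t+1}, where Δ_t H denotes the row-vector–matrix product. Then for every m ≥ 1, the adversarial perturbation satisfies Δ_m = (c_m·γ)·g + (d_m·γ²)·(g H), where c_m and d_m are the MIFGSM-with-APAA coefficient sequences. -/

import Mathlib

/-- First-order gradient coefficient: a_m = ∑_{i=1}^{m} μ^{i-1}. -/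
noncomputable def aCoef (μ : ℝ) (m : ℕ) : ℝ :=
  ∑ i ∈ Finset.Icc 1 m, μ ^ (i - 1)

/-- Second-order gradient coefficient: b_m = ∑_{i=2}^{m} (m-i+1)(i-1)μ^{i-2}. -/
noncomputable def bCoef (μ : ℝ) (m : ℕ) : ℝ :=
  ∑ i ∈ Finset.Icc 2 m, ((m : ℝ) - (i : ℝ) + 1) * ((i : ℝ) - 1) * μ ^ (i - 2)

/-- First-order perturbation coefficient: c_m = ∑_{i=1}^{m} (m-i+1)μ^{i-1}. -/
noncomputable def cCoef (μ : ℝ) (m : ℕ) : ℝ :=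
  ∑ i ∈ Finset.Icc 1 m, ((m : ℝ) - (i : ℝ) + 1) * μ ^ (i - 1)

/-- Second-order perturbation coefficient:
    d_m = ∑_{i=2}^{m} ((m-i+2)(m-i+1)(i-1)/2)μ^{i-2}. -/
noncomputable def dCoef (μ : ℝ) (m : ℕ) : ℝ :=
  ∑ i ∈ Finset.Icc 2 m,
    (((m : ℝ) - (i : ℝ) + 2) * ((m : ℝ) - (i : ℝ) + 1) * ((i : ℝ) - 1) / 2) * μ ^ (i - 2)

lemma aCoef_range (μ : ℝ) (m : ℕ) : aCoef μ m = ∑ i ∈ Finset.range m, μ ^ i := by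
  rw [aCoef, ← Finset.Ico_add_one_right_eq_Icc, Finset.sum_Ico_eq_sum_range]
  simp

lemma cCoef_range (μ : ℝ) (m : ℕ) :
    cCoef μ m = ∑ i ∈ Finset.range m, ((m : ℝ) - i) * μ ^ i := by
  rw [cCoef, ← Finset.Ico_add_one_right_eq_Icc, Finset.sum_Ico_eq_sum_range]
  simp only [Nat.add_sub_cancel_left, Nat.add_sub_cancel]
  apply Finset.sum_congr rfl
  intro i _
  push_cast
  ring

lemma bCoef_range (μ : ℝ) (m : ℕ) :
    bCoef μ m = ∑ i ∈ Finset.range (m - 1), ((m : ℝ) - i - 1) * (i + 1) * μ ^ i := by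
  rw [bCoef, ← Finset.Ico_add_one_right_eq_Icc, Finset.sum_Ico_eq_sum_range]
  have h : m + 1 - 2 = m - 1 := by omega
  rw [h]
  apply Finset.sum_congr rfl
  intro i _
  have h2 : 2 + i - 2 = i := by omega
  rw [h2]
  push_cast
  ring

lemma dCoef_range (μ : ℝ) (m : ℕ) :
    dCoef μ m = ∑ i ∈ Finset.range (m - 1),
      (((m : ℝ) - i) * ((m : ℝ) - i - 1) * (i + 1) / 2) * μ ^ i := by
  rw [dCoef, ← Finset.Ico_add_one_right_eq_Icc, Finset.sum_Ico_eq_sum_range]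
  have h : m + 1 - 2 = m - 1 := by omega
  rw [h]
  apply Finset.sum_congr rfl
  intro i _
  have h2 : 2 + i - 2 = i := by omega
  rw [h2]
  push_cast
  ring

lemma aRec (μ : ℝ) (m : ℕ) : aCoef μ (m + 1) = μ * aCoef μ m + 1 := by
  simp only [aCoef_range]
  exact geom_sum_succ

lemma cRec (μ : ℝ) (m : ℕ) : cCoef μ (m + 1) = cCoef μ m + aCoef μ (m + 1) := by
  simp only [cCoef_range, aCoef_range]
  have h1 : ∑ i ∈ Finset.range (m+1), ((↑(m+1):ℝ) - ↑i) * μ ^ i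
      = ∑ i ∈ Finset.range (m+1), (((m:ℝ) - ↑i) * μ ^ i + μ ^ i) := by
    apply Finset.sum_congr rfl; intro i _; push_cast; ring
  rw [h1, Finset.sum_add_distrib,
    Finset.sum_range_succ (f := fun i => ((m:ℝ) - ↑i) * μ ^ i)]
  simp

lemma bRec (μ : ℝ) (k : ℕ) :
    bCoef μ (k + 2) = μ * bCoef μ (k + 1) + cCoef μ (k + 1) := by
  simp only [bCoef_range, cCoef_range, Nat.add_sub_cancel]
  have h2 : k + 2 - 1 = k + 1 := by omega
  rw [h2, Finset.mul_sum]
  have h1 : ∑ i ∈ Finset.range (k+1), ((↑(k+2):ℝ) - ↑i - 1) * (↑i + 1) * μ ^ i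
      = ∑ i ∈ Finset.range (k+1),
        ((((k:ℝ)+1) - ↑i) * ↑i * μ ^ i + ((↑(k+1):ℝ) - ↑i) * μ ^ i) := by
    apply Finset.sum_congr rfl; intro i _; push_cast; ring
  rw [h1, Finset.sum_add_distrib]
  congr 1
  rw [Finset.sum_range_succ' (f := fun i => (((k:ℝ)+1) - ↑i) * ↑i * μ ^ i)]
  simp only [Nat.cast_zero, mul_zero, zero_mul, pow_zero, mul_one, add_zero]
  apply Finset.sum_congr rfl
  intro i _
  push_cast
  ring

lemma dRec (μ : ℝ) (k : ℕ) :
    dCoef μ (k + 2) = dCoef μ (k + 1) + bCoef μ (k + 2) := by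
  simp only [dCoef_range, bCoef_range, Nat.add_sub_cancel]
  have h2 : k + 2 - 1 = k + 1 := by omega
  rw [h2]
  have h3 : ∑ i ∈ Finset.range k,
      ((↑(k+1):ℝ) - ↑i) * ((↑(k+1):ℝ) - ↑i - 1) * (↑i + 1) / 2 * μ ^ i
      = ∑ i ∈ Finset.range (k+1),
      ((↑(k+1):ℝ) - ↑i) * ((↑(k+1):ℝ) - ↑i - 1) * (↑i + 1) / 2 * μ ^ i := by
    rw [Finset.sum_range_succ]
    push_cast
    simp
  rw [h3, ← Finset.sum_add_distrib]
  apply Finset.sum_congr rfl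
  intro i _
  push_cast
  ring

/-- Proposition 1, perturbation part: under the first-order model (H·H = 0), the
    MIFGSM-with-APAA perturbation satisfies Δ_m = (c_m·γ)·g + (d_m·γ²)·(gH) for every m ≥ 1. -/
theorem mifgsm_apaa_perturbation_closed_form
    (n : ℕ) (hn : 0 < n) (g : Fin n → ℝ) (H : Matrix (Fin n) (Fin n) ℝ)
    (hH : H * H = 0) (μ γ : ℝ)
    (G Δ : ℕ → Fin n → ℝ)
    (hG1 : G 1 = g) (hΔ1 : Δ 1 = γ • g)
    (hG : ∀ t : ℕ, 1 ≤ t → G (t + 1) = μ • G t + (g + Matrix.vecMul (Δ t) H))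
    (hΔ : ∀ t : ℕ, 1 ≤ t → Δ (t + 1) = Δ t + γ • G (t + 1)) :
    ∀ m : ℕ, 1 ≤ m →
      Δ m = (cCoef μ m * γ) • g + (dCoef μ m * γ ^ 2) • Matrix.vecMul g H := by

  have key : ∀ m : ℕ, 1 ≤ m →
      G m = (aCoef μ m) • g + (bCoef μ m * γ) • Matrix.vecMul g H ∧
      Δ m = (cCoef μ m * γ) • g + (dCoef μ m * γ ^ 2) • Matrix.vecMul g H := by
    intro m hm
    induction m, hm using Nat.le_induction with
    | base =>
      constructor
      · rw [hG1]
        simp [aCoef, bCoef]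
      · rw [hΔ1]
        simp [cCoef, dCoef]
    | succ m hm ih =>
      obtain ⟨ihG, ihΔ⟩ := ih
      obtain ⟨k, rfl⟩ := Nat.exists_eq_add_of_le' hm
      have e2 : k + 1 + 1 = k + 2 := rfl
      have hmul : Matrix.vecMul (Δ (k+1)) H
          = (cCoef μ (k+1) * γ) • Matrix.vecMul g H := by
        rw [ihΔ, Matrix.add_vecMul, Matrix.smul_vecMul, Matrix.smul_vecMul,
          Matrix.vecMul_vecMul, hH]
        simp
      have hGm1 : G (k+1+1) = (aCoef μ (k+1+1)) • g
          + (bCoef μ (k+1+1) * γ) • Matrix.vecMul g H := by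
        rw [hG (k+1) hm, ihG, hmul,
          show aCoef μ (k+1+1) = μ * aCoef μ (k+1) + 1 from aRec μ (k+1),
          show bCoef μ (k+1+1) = μ * bCoef μ (k+1) + cCoef μ (k+1) from bRec μ k]
        module
      constructor
      · exact hGm1
      · rw [hΔ (k+1) hm, ihΔ, hGm1,
          show cCoef μ (k+1+1) = cCoef μ (k+1) + aCoef μ (k+1+1) from cRec μ (k+1),
          show dCoef μ (k+1+1) = dCoef μ (k+1) + bCoef μ (k+1+1) from dRec μ k]
        module
  exact fun m hm => (key m hm).2
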